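/- Let R be a commutative Noetherian ring with minimal primes p_1, ..., p_n (n ≥ 2), and for each i let q_i be the product of all minimal primes except p_i. Then for all i ≠ j, the annihilator Ann(q_i q_j) is an essential ideal of R. -/

import Mathlib

/-- An ideal is essential if it intersects every nonzero ideal nontrivially. -/
def IsEssentialIdeal (R : Type*) [CommRing R] (E : Ideal R) : Prop :=
  ∀ J : Ideal R, J ≠ ⊥ → E ⊓ J ≠ ⊥

theorem annihilator_of_coatom_products_essential {R : Type*} [CommRing R]
    [IsNoetherianRing R] {n : ℕ} (hn : 2 ≤ n) (p : Fin n → Ideal R)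
    (hinj : Function.Injective p) (hrange : minimalPrimes R = Set.range p)
    (q : Fin n → Ideal R) (hq : ∀ i, q i = ∏ j ∈ Finset.univ.erase i, p j)
    {i j : Fin n} (hij : i ≠ j) :
    IsEssentialIdeal R (Submodule.annihilator (q i * q j)) := by
  classical
  intro J hJ
  set N : Ideal R := q i * q j with hN
  -- each q l is contained in any p k with k ≠ l
  have hql : ∀ l k : Fin n, k ≠ l → q l ≤ p k := by
    intro l k hkl
    rw [hq]
    calc ∏ m ∈ Finset.univ.erase l, p m ≤ (Finset.univ.erase l).inf p :=
          Ideal.prod_le_inf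
      _ ≤ p k := Finset.inf_le (Finset.mem_erase.mpr ⟨hkl, Finset.mem_univ k⟩)
  -- N is contained in the nilradical
  have hNnil : N ≤ nilradical R := by
    have h1 : nilradical R = sInf (minimalPrimes R) := by
      rw [minimalPrimes, Ideal.sInf_minimalPrimes]
      rfl
    rw [h1, hrange]
    apply le_sInf
    rintro P ⟨k, rfl⟩
    by_cases hk : k = i
    · subst hk
      calc N ≤ ⊤ * p k := Ideal.mul_mono le_top (hql j k hij)
        _ = p k := by simp
    · calc N ≤ p k * ⊤ := Ideal.mul_mono (hql i k hk) le_top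
        _ = p k := by simp
  -- nilradical is nilpotent, so N is nilpotent
  obtain ⟨k, hk⟩ := IsNoetherianRing.isNilpotent_nilradical R
  have hNk : N ^ k * J = ⊥ := by
    have h2 : N ^ k ≤ ⊥ := by
      calc N ^ k ≤ (nilradical R) ^ k := Ideal.pow_right_mono hNnil k
        _ = ⊥ := hk
    rw [le_bot_iff.mp h2]; simp
  -- choose minimal t with N^t * J = ⊥
  have hex : ∃ t, N ^ t * J = ⊥ := ⟨k, hNk⟩
  set t := Nat.find hex with htdef
  have ht0 : t ≠ 0 := by
    intro h0
    have := Nat.find_spec hex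
    rw [← htdef, h0, pow_zero, one_mul] at this
    exact hJ this
  obtain ⟨m, hm⟩ : ∃ m, t = m + 1 := ⟨t - 1, by omega⟩
  have h1 : N ^ m * J ≠ ⊥ := Nat.find_min hex (by omega)
  have h2 : N ^ (m + 1) * J = ⊥ := by rw [← hm]; exact Nat.find_spec hex
  have key : (N ^ m * J) * N = ⊥ := by
    rw [mul_right_comm, ← pow_succ, h2]
  have hle : N ^ m * J ≤ Submodule.annihilator N ⊓ J := by
    refine le_inf ?_ Ideal.mul_le_right
    intro x hx
    rw [Submodule.mem_annihilator]
    intro r hr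
    have : x * r ∈ (N ^ m * J) * N := Ideal.mul_mem_mul hx hr
    rw [key, Ideal.mem_bot] at this
    simpa [smul_eq_mul] using this
  intro hbot
  exact h1 (eq_bot_iff.mpr (hle.trans hbot.le))
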